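/- For every z ∈ 𝔻, the supremum sup{ |g'(z)| : g : 𝔻 → ℂ holomorphic, g(0) = 0, ρ_B(g) ≤ 1 } equals 1/(1 - |z|²), and it is attained by the function f_z(w) = (1 - |z|²)w/(1 - conj(z)w). -/

import Mathlib

open Complex Metric Set

noncomputable def fz (z : ℂ) : ℂ → ℂ :=
  fun w => ((1 - ‖z‖ ^ 2 : ℝ) : ℂ) * w / (1 - (starRingEnd ℂ) z * w)

lemma fz_hasDerivAt (z w : ℂ) (hz : ‖z‖ < 1) (hw : ‖w‖ < 1) :
    HasDerivAt (fz z) (((1 - ‖z‖ ^ 2 : ℝ) : ℂ) / (1 - (starRingEnd ℂ) z * w) ^ 2) w := by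
  have hne : (1 - (starRingEnd ℂ) z * w) ≠ 0 := by
    intro h
    have : ‖(starRingEnd ℂ) z * w‖ < 1 := by
      rw [norm_mul, RCLike.norm_conj]
      nlinarith [norm_nonneg z, norm_nonneg w]
    rw [sub_eq_zero] at h
    rw [← h] at this
    simp at this
  have h1 : HasDerivAt (fun w : ℂ => ((1 - ‖z‖ ^ 2 : ℝ) : ℂ) * w)
      ((1 - ‖z‖ ^ 2 : ℝ) : ℂ) w := by
    simpa only [mul_one, id_eq] using (hasDerivAt_id w).const_mul ((1 - ‖z‖ ^ 2 : ℝ) : ℂ)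
  have h2 : HasDerivAt (fun w : ℂ => 1 - (starRingEnd ℂ) z * w) (-(starRingEnd ℂ) z) w := by
    simpa using ((hasDerivAt_id w).const_mul ((starRingEnd ℂ) z)).const_sub 1
  have : HasDerivAt (fz z) _ w := h1.div h2 hne
  convert this using 1
  field_simp
  ring

theorem stmt7 (z : ℂ) (hz : z ∈ ball (0 : ℂ) 1) :
    IsGreatest {r : ℝ | ∃ g : ℂ → ℂ, DifferentiableOn ℂ g (ball (0 : ℂ) 1) ∧ g 0 = 0 ∧
        (∀ w ∈ ball (0 : ℂ) 1, (1 - ‖w‖ ^ 2) * ‖deriv g w‖ ≤ 1) ∧ r = ‖deriv g z‖}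
      (1 / (1 - ‖z‖ ^ 2)) ∧
    DifferentiableOn ℂ (fz z) (ball (0 : ℂ) 1) ∧ fz z 0 = 0 ∧
    (∀ w ∈ ball (0 : ℂ) 1, (1 - ‖w‖ ^ 2) * ‖deriv (fz z) w‖ ≤ 1) ∧
    ‖deriv (fz z) z‖ = 1 / (1 - ‖z‖ ^ 2) := by
  rw [mem_ball, dist_zero_right] at hz
  have hz2 : (0:ℝ) < 1 - ‖z‖ ^ 2 := by nlinarith [norm_nonneg z]
  have hdiff : DifferentiableOn ℂ (fz z) (ball (0 : ℂ) 1) := by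
    intro w hw
    rw [mem_ball, dist_zero_right] at hw
    exact (fz_hasDerivAt z w hz hw).differentiableAt.differentiableWithinAt
  have hderiv : ∀ w : ℂ, ‖w‖ < 1 →
      deriv (fz z) w = ((1 - ‖z‖ ^ 2 : ℝ) : ℂ) / (1 - (starRingEnd ℂ) z * w) ^ 2 :=
    fun w hw => (fz_hasDerivAt z w hz hw).deriv
  have hbound : ∀ w ∈ ball (0 : ℂ) 1, (1 - ‖w‖ ^ 2) * ‖deriv (fz z) w‖ ≤ 1 := by
    intro w hw
    rw [mem_ball, dist_zero_right] at hw
    rw [hderiv w hw, norm_div, norm_pow]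
    have h1 : (1:ℝ) - ‖z‖ * ‖w‖ ≤ ‖1 - (starRingEnd ℂ) z * w‖ := by
      have := norm_sub_norm_le (1 : ℂ) ((starRingEnd ℂ) z * w)
      simpa [norm_mul] using this
    have h2 : (0:ℝ) ≤ 1 - ‖z‖ * ‖w‖ := by nlinarith [norm_nonneg z, norm_nonneg w]
    have h3 : (1 - ‖z‖ * ‖w‖)^2 ≤ ‖1 - (starRingEnd ℂ) z * w‖ ^ 2 := by
      nlinarith [norm_nonneg (1 - (starRingEnd ℂ) z * w)]
    have hnorm : ‖((1 - ‖z‖ ^ 2 : ℝ) : ℂ)‖ = 1 - ‖z‖ ^ 2 := by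
      rw [Complex.norm_real, Real.norm_eq_abs, abs_of_pos hz2]
    rw [hnorm]
    have h2' : (0:ℝ) < 1 - ‖z‖ * ‖w‖ := by nlinarith [norm_nonneg z, norm_nonneg w]
    have hN : (0:ℝ) < ‖1 - (starRingEnd ℂ) z * w‖ ^ 2 := lt_of_lt_of_le (by positivity) h3
    rw [← mul_div_assoc, div_le_one hN]
    nlinarith [norm_nonneg z, norm_nonneg w, sq_nonneg (‖z‖ - ‖w‖)]
  have hat : ‖deriv (fz z) z‖ = 1 / (1 - ‖z‖ ^ 2) := by
    rw [hderiv z hz]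
    have : (1 : ℂ) - (starRingEnd ℂ) z * z = ((1 - ‖z‖ ^ 2 : ℝ) : ℂ) := by
      push_cast
      rw [mul_comm, Complex.mul_conj, Complex.normSq_eq_norm_sq]
      simp
    rw [this, norm_div, norm_pow, Complex.norm_real, Real.norm_eq_abs, abs_of_pos hz2]
    field_simp
  refine ⟨⟨⟨fz z, hdiff, by simp [fz], hbound, hat.symm⟩, ?_⟩, hdiff, by simp [fz], hbound, hat⟩
  rintro r ⟨g, hg, hg0, hgb, rfl⟩
  have := hgb z (by simpa [mem_ball, dist_zero_right] using hz)
  rw [le_div_iff₀ hz2]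
  linarith
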